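/- arXiv:2204.09799 — 4 statements merged into one kernel-verified Lean document; each statement's English description precedes it below -/
import Mathlib

section
/- Let u be a C¹ vector field on a neighborhood of the boundary of a smooth domain Ω ⊂ ℝ³ with unit normal n and tangential projection Π = Id − n⊗n. Then the tangential part of the normal derivative satisfies Π(∂ₙ u) = Π(curl u × n) + Π ∇(u·n) − Π((D n) u), where [(D n)u]_i = Σ_k ∂_i n_k u_k. -/
noncomputable section

/-- ℝ³ modelled as `Fin 3 → ℝ`. -/
abbrev E3 : Type := Fin 3 → ℝ

/-- `i`-th partial derivative of a scalar function on ℝ³. -/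
def pd (i : Fin 3) (g : E3 → ℝ) (x : E3) : ℝ :=
  fderiv ℝ g x (Pi.single i 1)

/-- Gradient. -/
def grad (f : E3 → ℝ) (x : E3) : E3 := fun i => pd i f x

/-- Dot product in ℝ³. -/
def dot (a b : E3) : ℝ := ∑ i, a i * b i

/-- Cross product in ℝ³. -/
def cross (a b : E3) : E3 :=
  ![a 1 * b 2 - a 2 * b 1, a 2 * b 0 - a 0 * b 2, a 0 * b 1 - a 1 * b 0]

/-- Curl of a vector field on ℝ³. -/
def curl (u : E3 → E3) (x : E3) : E3 :=
  ![pd 1 (fun y => u y 2) x - pd 2 (fun y => u y 1) x,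
    pd 2 (fun y => u y 0) x - pd 0 (fun y => u y 2) x,
    pd 0 (fun y => u y 1) x - pd 1 (fun y => u y 0) x]

/-- Directional derivative of a vector field in direction `v`. -/
def ddir (v : E3) (u : E3 → E3) (x : E3) : E3 := fun i => fderiv ℝ (fun y => u y i) x v

/-- Tangential projection `Π v = v − (v·n) n`. -/
def tproj (n v : E3) : E3 := v - (dot v n) • n

lemma tproj_add_sub (n a b c : E3) : tproj n (a + b - c) = tproj n a + tproj n b - tproj n c := by
  funext i
  simp only [tproj, dot, Pi.add_apply, Pi.sub_apply, Pi.smul_apply, smul_eq_mul,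
    Finset.sum_sub_distrib, Finset.sum_add_distrib, sub_mul, add_mul]
  ring

lemma fderiv_apply_eq_sum (f : E3 → ℝ) (x v : E3) (hf : DifferentiableAt ℝ f x) :
    fderiv ℝ f x v = ∑ k, v k * fderiv ℝ f x (Pi.single k 1) := by
  have hv : v = ∑ k : Fin 3, v k • (Pi.single k 1 : E3) := by
    funext j
    simp [Pi.single_apply, Finset.sum_ite_eq', mul_comm]
  conv_lhs => rw [hv]
  rw [map_sum]
  simp [smul_eq_mul]

lemma pd_dot (u n : E3 → E3) (x : E3) (hu : ∀ k, DifferentiableAt ℝ (fun y => u y k) x)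
    (hn : ∀ k, DifferentiableAt ℝ (fun y => n y k) x) (i : Fin 3) :
    pd i (fun y => dot (u y) (n y)) x
      = ∑ k, (pd i (fun y => u y k) x * n x k + u x k * pd i (fun y => n y k) x) := by
  simp only [pd, dot]
  rw [fderiv_fun_sum (A := fun k y => u y k * n y k) (fun k _ => ((hu k).fun_mul (hn k)))]
  simp only [ContinuousLinearMap.coe_sum', Finset.sum_apply]
  refine Finset.sum_congr rfl fun k _ => ?_
  rw [fderiv_fun_mul (hu k) (hn k)]
  simp [smul_eq_mul]; ring

/-- For a `C¹` vector field `u` near the boundary of `Ω ⊆ ℝ³`, with `n` the (unit) normal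
extension and `Π = Id − n ⊗ n`,
`Π(∂ₙ u) = Π(curl u × n) + Π ∇(u·n) − Π((D n) u)`, where `[(Dn)u]_i = Σ_k ∂_i n_k u_k`. -/
theorem tangential_part_of_normal_derivative (Ω : Set E3) (n u : E3 → E3)
    (hn1 : ∀ x ∈ frontier Ω, dot (n x) (n x) = 1)
    (hn : ∀ x ∈ frontier Ω, ∀ i, DifferentiableAt ℝ (fun y => n y i) x)
    (hu : ∀ x ∈ frontier Ω, ∀ i, DifferentiableAt ℝ (fun y => u y i) x) :
    ∀ x ∈ frontier Ω,
      tproj (n x) (ddir (n x) u x)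
        = tproj (n x) (cross (curl u x) (n x))
            + tproj (n x) (grad (fun y => dot (u y) (n y)) x)
            - tproj (n x) (fun i => ∑ k, pd i (fun y => n y k) x * u x k) := by
  intro x hx
  have hu' := hu x hx
  have hn' := hn x hx
  rw [← tproj_add_sub]
  have key : ddir (n x) u x
      = cross (curl u x) (n x) + grad (fun y => dot (u y) (n y)) x
          - (fun i => ∑ k, pd i (fun y => n y k) x * u x k) := by
    funext i
    have hdd : ddir (n x) u x i = ∑ k, n x k * pd k (fun y => u y i) x := by
      simp only [ddir]
      rw [fderiv_apply_eq_sum _ _ _ (hu' i)]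
      rfl
    have hg : ∀ j : Fin 3, grad (fun y => dot (u y) (n y)) x j
        = ∑ k, (pd j (fun y => u y k) x * n x k + u x k * pd j (fun y => n y k) x) := by
      intro j
      exact pd_dot u n x hu' hn' j
    simp only [Pi.add_apply, Pi.sub_apply, hdd, hg]
    fin_cases i <;>
      simp [cross, curl, Fin.sum_univ_three] <;> ring
  rw [key]
end
end

section
/- Commutator estimate in conormal Sobolev spaces: for a multi-index I with |I| = k ≥ 2, ‖[Z^I, f] g(t)‖_{L²} ≲ ‖Z f(t)‖_{H^{k−1}_co} · |||g|||_{[k/2]−1,∞,t} + ‖g(t)‖_{H^{k−1}_co} · |||Z f|||_{[(k−1)/2],∞,t}, where [Z^I, f]g = Z^I(fg) − f Z^I g. -/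
open MeasureTheory
open scoped ENNReal ContDiff

noncomputable section

/-- The ambient space ℝ³. -/
abbrev E : Type := Fin 3 → ℝ

/-- The first-order derivation along the (conormal) vector field `W j`. -/
def Zop {M : ℕ} (W : Fin M → E → E) (j : Fin M) (h : E → ℝ) : E → ℝ :=
  fun x => fderiv ℝ h x (W j x)

/-- Iterated conormal derivative `Z^I`. -/
def ZIter {M : ℕ} (W : Fin M → E → E) : List (Fin M) → (E → ℝ) → E → ℝ
  | [], h => h
  | j :: L, h => Zop W j (ZIter W L h)

/-- Conormal Sobolev norm `‖h‖_{H^k_co} = Σ_{|I| ≤ k} ‖Z^I h‖_{L²(Ω)}`. -/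
def HcoN {M : ℕ} (Ω : Set E) (W : Fin M → E → E) (k : ℕ) (h : E → ℝ) : ℝ≥0∞ :=
  ∑ l ∈ Finset.range (k + 1), ∑ J : Fin l → Fin M,
    eLpNorm (ZIter W (List.ofFn J) h) 2 (volume.restrict Ω)

/-- Conormal `L^∞` norm `|||g|||_{m,∞,t} = Σ_{|I| ≤ m} ‖Z^I g‖_{L^∞([0,t]×Ω)}`. -/
def LinfN {M : ℕ} (Ω : Set E) (W : Fin M → E → E) (m : ℕ) (t : ℝ) (g : ℝ → E → ℝ) :
    ℝ≥0∞ :=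
  ∑ l ∈ Finset.range (m + 1), ∑ J : Fin l → Fin M,
    ⨆ s ∈ Set.Icc (0 : ℝ) t, ⨆ x ∈ Ω, (‖ZIter W (List.ofFn J) (g s) x‖₊ : ℝ≥0∞)

/-! ### Auxiliary lemmas -/

section Aux

variable {M : ℕ} {W : Fin M → E → E}

lemma zop_contDiff (hW : ∀ j, ContDiff ℝ ∞ (W j)) {h : E → ℝ}
    (hh : ContDiff ℝ ∞ h) (j : Fin M) : ContDiff ℝ ∞ (Zop W j h) :=
  (hh.fderiv_right (by simp)).clm_apply (hW j)

lemma ziter_contDiff (hW : ∀ j, ContDiff ℝ ∞ (W j)) {h : E → ℝ}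
    (hh : ContDiff ℝ ∞ h) : ∀ L : List (Fin M), ContDiff ℝ ∞ (ZIter W L h)
  | [] => hh
  | j :: L => zop_contDiff hW (ziter_contDiff hW hh L) j

lemma contDiff_diffble {h : E → ℝ} (hh : ContDiff ℝ ∞ h) : Differentiable ℝ h :=
  hh.differentiable (by simp)

lemma zop_add (j : Fin M) {h1 h2 : E → ℝ} (d1 : Differentiable ℝ h1)
    (d2 : Differentiable ℝ h2) (x : E) :
    Zop W j (fun y => h1 y + h2 y) x = Zop W j h1 x + Zop W j h2 x := by
  simp only [Zop]
  rw [fderiv_fun_add (d1 x) (d2 x)]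
  simp

lemma zop_mul (j : Fin M) {h1 h2 : E → ℝ} (d1 : Differentiable ℝ h1)
    (d2 : Differentiable ℝ h2) (x : E) :
    Zop W j (fun y => h1 y * h2 y) x = Zop W j h1 x * h2 x + h1 x * Zop W j h2 x := by
  simp only [Zop]
  rw [fderiv_fun_mul (d1 x) (d2 x)]
  simp [smul_eq_mul]
  ring

lemma diff_list_sum {α : Type*} (l : List α) (F : α → E → ℝ)
    (hF : ∀ a ∈ l, Differentiable ℝ (F a)) :
    Differentiable ℝ (fun y => (l.map fun a => F a y).sum) := by
  induction l with
  | nil => simpa using differentiable_const (0 : ℝ)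
  | cons a l ih =>
    simp only [List.map_cons, List.sum_cons]
    exact (hF a (List.mem_cons_self)).add
      (ih fun b hb => hF b (List.mem_cons_of_mem a hb))

/-- The list of nontrivial splittings for the Leibniz formula. -/
def splits {M : ℕ} : List (Fin M) → List (List (Fin M) × List (Fin M))
  | [] => []
  | j :: L =>
      ([j], L) :: (((splits L).map fun p => (j :: p.1, p.2))
        ++ ((splits L).map fun p => (p.1, j :: p.2)))

lemma splits_mem {L : List (Fin M)} {p : List (Fin M) × List (Fin M)}
    (hp : p ∈ splits L) : p.1.length + p.2.length = L.length ∧ 1 ≤ p.1.length := by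
  induction L generalizing p with
  | nil => simp [splits] at hp
  | cons j L ih =>
    simp only [splits, List.mem_cons, List.mem_append, List.mem_map] at hp
    rcases hp with rfl | ⟨q, hq, rfl⟩ | ⟨q, hq, rfl⟩
    · constructor <;> simp <;> omega
    · obtain ⟨h1, h2⟩ := ih hq; constructor <;> simp <;> omega
    · obtain ⟨h1, h2⟩ := ih hq; constructor <;> simp <;> omega

lemma splits_length : ∀ L : List (Fin M), (splits L).length + 1 = 2 ^ L.length
  | [] => rfl
  | j :: L => by
    have := splits_length L
    simp only [splits, List.length_cons, List.length_append, List.length_map, pow_succ]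
    omega

lemma zop_split_sum (hW : ∀ j, ContDiff ℝ ∞ (W j)) (j : Fin M)
    (l : List (List (Fin M) × List (Fin M))) (f g : E → ℝ)
    (hf : ContDiff ℝ ∞ f) (hg : ContDiff ℝ ∞ g) (x : E) :
    Zop W j (fun y => (l.map fun p => ZIter W p.1 f y * ZIter W p.2 g y).sum) x
      = (l.map fun p => Zop W j (ZIter W p.1 f) x * ZIter W p.2 g x
          + ZIter W p.1 f x * Zop W j (ZIter W p.2 g) x).sum := by
  induction l with
  | nil =>
    simp only [List.map_nil, List.sum_nil, Zop]
    simp [fderiv_const]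
  | cons a l ih =>
    simp only [List.map_cons, List.sum_cons]
    have d1 : Differentiable ℝ (fun y => ZIter W a.1 f y * ZIter W a.2 g y) :=
      (contDiff_diffble (ziter_contDiff hW hf a.1)).mul
        (contDiff_diffble (ziter_contDiff hW hg a.2))
    have d2 : Differentiable ℝ (fun y => (l.map fun p =>
        ZIter W p.1 f y * ZIter W p.2 g y).sum) :=
      diff_list_sum l _ fun p _ =>
        (contDiff_diffble (ziter_contDiff hW hf p.1)).mul
          (contDiff_diffble (ziter_contDiff hW hg p.2))
    rw [zop_add j d1 d2 x, ih,
      zop_mul j (contDiff_diffble (ziter_contDiff hW hf a.1))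
        (contDiff_diffble (ziter_contDiff hW hg a.2)) x]

/-- The Leibniz expansion of the commutator. -/
lemma ziter_mul_expand (hW : ∀ j, ContDiff ℝ ∞ (W j)) :
    ∀ (L : List (Fin M)) (f g : E → ℝ), ContDiff ℝ ∞ f → ContDiff ℝ ∞ g →
      ZIter W L (fun y => f y * g y) =
        fun x => f x * ZIter W L g x
          + ((splits L).map fun p => ZIter W p.1 f x * ZIter W p.2 g x).sum := by
  intro L
  induction L with
  | nil => intro f g hf hg; funext x; simp [ZIter, splits]
  | cons j L ih =>
    intro f g hf hg
    funext x
    have df : Differentiable ℝ f := contDiff_diffble hf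
    have dg : Differentiable ℝ (ZIter W L g) :=
      contDiff_diffble (ziter_contDiff hW hg L)
    have d1 : Differentiable ℝ (fun y => f y * ZIter W L g y) := df.mul dg
    have d2 : Differentiable ℝ (fun y => ((splits L).map fun p =>
        ZIter W p.1 f y * ZIter W p.2 g y).sum) :=
      diff_list_sum _ _ fun p _ =>
        (contDiff_diffble (ziter_contDiff hW hf p.1)).mul
          (contDiff_diffble (ziter_contDiff hW hg p.2))
    calc ZIter W (j :: L) (fun y => f y * g y) x
        = Zop W j (fun y => f y * ZIter W L g y
            + ((splits L).map fun p => ZIter W p.1 f y * ZIter W p.2 g y).sum) x := by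
          show Zop W j (ZIter W L fun y => f y * g y) x = _
          rw [ih f g hf hg]
      _ = Zop W j (fun y => f y * ZIter W L g y) x
            + Zop W j (fun y => ((splits L).map fun p =>
                ZIter W p.1 f y * ZIter W p.2 g y).sum) x := zop_add j d1 d2 x
      _ = (Zop W j f x * ZIter W L g x + f x * Zop W j (ZIter W L g) x)
            + ((splits L).map fun p => Zop W j (ZIter W p.1 f) x * ZIter W p.2 g x
                + ZIter W p.1 f x * Zop W j (ZIter W p.2 g) x).sum := by
          rw [zop_mul j df dg x, zop_split_sum hW j (splits L) f g hf hg x]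
      _ = f x * ZIter W (j :: L) g x
            + ((splits (j :: L)).map fun p => ZIter W p.1 f x * ZIter W p.2 g x).sum := by
          simp only [splits, List.map_cons, List.sum_cons, List.map_append,
            List.sum_append, List.map_map, List.sum_map_add, Function.comp_def]
          show _ = f x * Zop W j (ZIter W L g) x + (Zop W j (ZIter W [] f) x * ZIter W L g x + _)
          simp only [ZIter]
          ring

lemma ziter_append (L1 L2 : List (Fin M)) (h : E → ℝ) :
    ZIter W (L1 ++ L2) h = ZIter W L1 (ZIter W L2 h) := by
  induction L1 with
  | nil => rfl
  | cons j L ih => show Zop W j (ZIter W (L ++ L2) h) = _; rw [ih]; rfl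

/-- The basic Hölder-type bound on a set. -/
lemma mul_L2 {Ω : Set E} {u v : E → ℝ} (hu : Continuous u) (hv : Continuous v) :
    eLpNorm (fun x => u x * v x) 2 (volume.restrict Ω)
      ≤ (⨆ x ∈ Ω, (‖v x‖₊ : ℝ≥0∞)) * eLpNorm u 2 (volume.restrict Ω) := by
  set B := ⨆ x ∈ Ω, (‖v x‖₊ : ℝ≥0∞) with hB
  have hcl : ∀ x ∈ closure Ω, (‖v x‖₊ : ℝ≥0∞) ≤ B := by
    have hC : IsClosed {x : E | (‖v x‖₊ : ℝ≥0∞) ≤ B} :=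
      isClosed_le (by fun_prop) continuous_const
    have hsub : Ω ⊆ {x : E | (‖v x‖₊ : ℝ≥0∞) ≤ B} := fun y hy =>
      le_iSup₂ (f := fun x (_ : x ∈ Ω) => (‖v x‖₊ : ℝ≥0∞)) y hy
    exact fun x hx => hC.closure_subset_iff.mpr hsub hx
  have hae : ∀ᵐ x ∂(volume.restrict Ω), (‖v x‖₊ : ℝ≥0∞) ≤ B := by
    rw [ae_iff]
    refine measure_mono_null (fun x hx => ?_) (t := (closure Ω)ᶜ) ?_
    · simp only [Set.mem_setOf_eq] at hx
      exact fun hmem => hx (hcl x hmem)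
    · rw [Measure.restrict_apply isClosed_closure.measurableSet.compl]
      have hempty : (closure Ω)ᶜ ∩ Ω = ∅ := by
        ext x
        simp only [Set.mem_inter_iff, Set.mem_compl_iff, Set.mem_empty_iff_false, iff_false,
          not_and]
        exact fun hx hΩ => hx (subset_closure hΩ)
      rw [hempty, measure_empty]
  have hmeas : Measurable fun x => (‖u x‖₊ : ℝ≥0∞) ^ (2 : ℝ) :=
    (hu.measurable.nnnorm.coe_nnreal_ennreal).pow_const _
  rw [eLpNorm_eq_lintegral_rpow_enorm_toReal two_ne_zero ENNReal.ofNat_ne_top,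
    eLpNorm_eq_lintegral_rpow_enorm_toReal two_ne_zero ENNReal.ofNat_ne_top]
  simp only [ENNReal.toReal_ofNat]
  calc (∫⁻ x, (‖u x * v x‖₊ : ℝ≥0∞) ^ (2 : ℝ) ∂(volume.restrict Ω)) ^ (1 / (2:ℝ))
      ≤ (∫⁻ x, B ^ (2:ℝ) * (‖u x‖₊ : ℝ≥0∞) ^ (2 : ℝ) ∂(volume.restrict Ω)) ^ (1 / (2:ℝ)) := by
        refine ENNReal.rpow_le_rpow (lintegral_mono_ae (hae.mono fun x hx => ?_)) (by norm_num)
        rw [nnnorm_mul, ENNReal.coe_mul,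
          ENNReal.mul_rpow_of_nonneg _ _ (by norm_num : (0:ℝ) ≤ 2)]
        rw [mul_comm (B ^ (2:ℝ))]
        exact mul_le_mul_right (ENNReal.rpow_le_rpow hx (by norm_num)) _
    _ = B * (∫⁻ x, (‖u x‖₊ : ℝ≥0∞) ^ (2 : ℝ) ∂(volume.restrict Ω)) ^ (1 / (2:ℝ)) := by
        rw [lintegral_const_mul _ hmeas,
          ENNReal.mul_rpow_of_nonneg _ _ (by norm_num : (0:ℝ) ≤ 1/2),
          ← ENNReal.rpow_mul]
        norm_num

lemma le_HcoN {Ω : Set E} (k' : ℕ) (h : E → ℝ) (A : List (Fin M)) (hA : A.length ≤ k') :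
    eLpNorm (ZIter W A h) 2 (volume.restrict Ω) ≤ HcoN Ω W k' h := by
  have h1 : eLpNorm (ZIter W A h) 2 (volume.restrict Ω)
      = eLpNorm (ZIter W (List.ofFn A.get) h) 2 (volume.restrict Ω) := by
    rw [List.ofFn_get]
  rw [HcoN, h1]
  calc eLpNorm (ZIter W (List.ofFn A.get) h) 2 (volume.restrict Ω)
      ≤ ∑ J : Fin A.length → Fin M,
          eLpNorm (ZIter W (List.ofFn J) h) 2 (volume.restrict Ω) :=
        Finset.single_le_sum
          (f := fun J : Fin A.length → Fin M =>
            eLpNorm (ZIter W (List.ofFn J) h) 2 (volume.restrict Ω))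
          (fun _ _ => zero_le) (Finset.mem_univ A.get)
    _ ≤ _ := Finset.single_le_sum
        (f := fun l => ∑ J : Fin l → Fin M,
          eLpNorm (ZIter W (List.ofFn J) h) 2 (volume.restrict Ω))
        (fun _ _ => zero_le) (Finset.mem_range.mpr (by omega))

lemma le_LinfN {Ω : Set E} (m : ℕ) (t : ℝ) (ht : 0 ≤ t) (g : ℝ → E → ℝ)
    (B : List (Fin M)) (hB : B.length ≤ m) :
    (⨆ x ∈ Ω, (‖ZIter W B (g t) x‖₊ : ℝ≥0∞)) ≤ LinfN Ω W m t g := by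
  have h1 : (⨆ x ∈ Ω, (‖ZIter W B (g t) x‖₊ : ℝ≥0∞))
      ≤ ⨆ s ∈ Set.Icc (0:ℝ) t, ⨆ x ∈ Ω, (‖ZIter W (List.ofFn B.get) (g s) x‖₊ : ℝ≥0∞) := by
    rw [List.ofFn_get]
    exact le_biSup (f := fun s => ⨆ x ∈ Ω, (‖ZIter W B (g s) x‖₊ : ℝ≥0∞)) ⟨ht, le_rfl⟩
  refine h1.trans ?_
  rw [LinfN]
  calc (⨆ s ∈ Set.Icc (0:ℝ) t, ⨆ x ∈ Ω, (‖ZIter W (List.ofFn B.get) (g s) x‖₊ : ℝ≥0∞))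
      ≤ ∑ J : Fin B.length → Fin M,
          ⨆ s ∈ Set.Icc (0:ℝ) t, ⨆ x ∈ Ω, (‖ZIter W (List.ofFn J) (g s) x‖₊ : ℝ≥0∞) :=
        Finset.single_le_sum
          (f := fun J : Fin B.length → Fin M =>
            ⨆ s ∈ Set.Icc (0:ℝ) t, ⨆ x ∈ Ω, (‖ZIter W (List.ofFn J) (g s) x‖₊ : ℝ≥0∞))
          (fun _ _ => zero_le) (Finset.mem_univ B.get)
    _ ≤ _ := Finset.single_le_sum
        (f := fun l => ∑ J : Fin l → Fin M,
          ⨆ s ∈ Set.Icc (0:ℝ) t, ⨆ x ∈ Ω, (‖ZIter W (List.ofFn J) (g s) x‖₊ : ℝ≥0∞))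
        (fun _ _ => zero_le) (Finset.mem_range.mpr (by omega))

lemma eLpNorm_list_sum {α : Type*} (l : List α) (F : α → E → ℝ)
    (hF : ∀ a ∈ l, Continuous (F a)) (μ : Measure E) :
    eLpNorm (fun x => (l.map fun a => F a x).sum) 2 μ
      ≤ (l.map fun a => eLpNorm (F a) 2 μ).sum := by
  induction l with
  | nil => simp
  | cons a l ih =>
    simp only [List.map_cons, List.sum_cons]
    have hc : Continuous fun x => (l.map fun b => F b x).sum :=
      continuous_list_sum l fun b hb => hF b (List.mem_cons_of_mem a hb)
    refine le_trans (eLpNorm_add_le ((hF a (List.mem_cons_self)).aestronglyMeasurable)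
      hc.aestronglyMeasurable one_le_two) ?_
    exact add_le_add le_rfl (ih fun b hb => hF b (List.mem_cons_of_mem a hb))

end Aux

/-- Commutator estimate in conormal Sobolev spaces: for `|I| = k ≥ 2`,
`‖[Z^I, f] g(t)‖_{L²} ≲ ‖Z f(t)‖_{H^{k−1}_co} |||g|||_{[k/2]−1,∞,t}
  + ‖g(t)‖_{H^{k−1}_co} |||Z f|||_{[(k−1)/2],∞,t}`,
where `[Z^I, f] g = Z^I(fg) − f Z^I g` and `Z f` denotes the collection of first
conormal derivatives of `f`. -/
theorem conormal_commutator_estimate (M k : ℕ) (hk : 2 ≤ k) :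
    ∃ C : ℝ≥0∞, 0 < C ∧ C < ⊤ ∧
      ∀ (Ω : Set E) (W : Fin M → E → E), (∀ j, ContDiff ℝ ∞ (W j)) →
        ∀ (f g : ℝ → E → ℝ), (∀ s, ContDiff ℝ ∞ (f s)) → (∀ s, ContDiff ℝ ∞ (g s)) →
          ∀ t : ℝ, 0 ≤ t → ∀ I : Fin k → Fin M,
            eLpNorm
                (fun x => ZIter W (List.ofFn I) (fun y => f t y * g t y) x
                  - f t x * ZIter W (List.ofFn I) (g t) x) 2 (volume.restrict Ω)
              ≤ C * ((∑ j : Fin M, HcoN Ω W (k - 1) (Zop W j (f t)))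
                        * LinfN Ω W (k / 2 - 1) t g
                     + HcoN Ω W (k - 1) (g t)
                        * ∑ j : Fin M, LinfN Ω W ((k - 1) / 2) t fun s => Zop W j (f s)) := by
  refine ⟨2 ^ k, by positivity, ENNReal.pow_lt_top ENNReal.ofNat_lt_top, ?_⟩
  intro Ω W hW f g hf hg t ht I
  set L := List.ofFn I with hLdef
  have hLlen : L.length = k := List.length_ofFn
  set S : ℝ≥0∞ := (∑ j : Fin M, HcoN Ω W (k - 1) (Zop W j (f t))) * LinfN Ω W (k / 2 - 1) t g
      + HcoN Ω W (k - 1) (g t) * ∑ j : Fin M, LinfN Ω W ((k - 1) / 2) t fun s => Zop W j (f s)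
    with hSdef
  have key : (fun x => ZIter W L (fun y => f t y * g t y) x - f t x * ZIter W L (g t) x)
      = fun x => ((splits L).map fun p => ZIter W p.1 (f t) x * ZIter W p.2 (g t) x).sum := by
    funext x
    rw [congrFun (ziter_mul_expand hW L (f t) (g t) (hf t) (hg t)) x]
    ring
  rw [key]
  have hcont : ∀ p ∈ splits L,
      Continuous fun x => ZIter W p.1 (f t) x * ZIter W p.2 (g t) x := fun p _ =>
    ((ziter_contDiff hW (hf t) p.1).continuous).mul ((ziter_contDiff hW (hg t) p.2).continuous)
  refine le_trans (eLpNorm_list_sum (splits L) _ hcont _) ?_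
  -- termwise bound
  have hterm : ∀ p ∈ splits L,
      eLpNorm (fun x => ZIter W p.1 (f t) x * ZIter W p.2 (g t) x) 2 (volume.restrict Ω)
        ≤ S := by
    intro p hp
    obtain ⟨hlen, hpos⟩ := splits_mem hp
    rw [hLlen] at hlen
    rcases List.eq_nil_or_concat p.1 with h1 | ⟨A, j, hAj⟩
    · rw [h1] at hpos; simp at hpos
    rw [List.concat_eq_append] at hAj
    have hP1 : ZIter W p.1 (f t) = ZIter W A (Zop W j (f t)) := by
      rw [hAj, ziter_append]; rfl
    have hA1 : A.length + 1 = p.1.length := by rw [hAj]; simp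
    by_cases hc : p.2.length ≤ k / 2 - 1
    · -- L∞ on g, L² on f
      have step1 : eLpNorm (fun x => ZIter W p.1 (f t) x * ZIter W p.2 (g t) x) 2
            (volume.restrict Ω)
          ≤ (⨆ x ∈ Ω, (‖ZIter W p.2 (g t) x‖₊ : ℝ≥0∞))
              * eLpNorm (ZIter W p.1 (f t)) 2 (volume.restrict Ω) :=
        mul_L2 ((ziter_contDiff hW (hf t) p.1).continuous)
          ((ziter_contDiff hW (hg t) p.2).continuous)
      refine le_trans step1 ?_
      have b1 : (⨆ x ∈ Ω, (‖ZIter W p.2 (g t) x‖₊ : ℝ≥0∞)) ≤ LinfN Ω W (k / 2 - 1) t g :=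
        le_LinfN _ t ht g p.2 hc
      have b2 : eLpNorm (ZIter W p.1 (f t)) 2 (volume.restrict Ω)
          ≤ ∑ j' : Fin M, HcoN Ω W (k - 1) (Zop W j' (f t)) := by
        rw [hP1]
        refine le_trans (le_HcoN (k - 1) _ A (by omega)) ?_
        exact Finset.single_le_sum (f := fun j' => HcoN Ω W (k - 1) (Zop W j' (f t)))
          (fun _ _ => zero_le) (Finset.mem_univ j)
      calc _ ≤ LinfN Ω W (k / 2 - 1) t g * ∑ j' : Fin M, HcoN Ω W (k - 1) (Zop W j' (f t)) :=
            mul_le_mul' b1 b2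
        _ = (∑ j' : Fin M, HcoN Ω W (k - 1) (Zop W j' (f t))) * LinfN Ω W (k / 2 - 1) t g :=
            mul_comm _ _
        _ ≤ S := le_self_add
    · -- L∞ on f, L² on g
      have hre : (fun x => ZIter W p.1 (f t) x * ZIter W p.2 (g t) x)
          = fun x => ZIter W p.2 (g t) x * ZIter W p.1 (f t) x := by
        funext x; ring
      rw [hre]
      have step1 : eLpNorm (fun x => ZIter W p.2 (g t) x * ZIter W p.1 (f t) x) 2
            (volume.restrict Ω)
          ≤ (⨆ x ∈ Ω, (‖ZIter W p.1 (f t) x‖₊ : ℝ≥0∞))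
              * eLpNorm (ZIter W p.2 (g t)) 2 (volume.restrict Ω) :=
        mul_L2 ((ziter_contDiff hW (hg t) p.2).continuous)
          ((ziter_contDiff hW (hf t) p.1).continuous)
      refine le_trans step1 ?_
      have b1 : (⨆ x ∈ Ω, (‖ZIter W p.1 (f t) x‖₊ : ℝ≥0∞))
          ≤ LinfN Ω W ((k - 1) / 2) t fun s => Zop W j (f s) := by
        rw [hP1]
        exact le_LinfN _ t ht (fun s => Zop W j (f s)) A (by omega)
      have b2 : eLpNorm (ZIter W p.2 (g t)) 2 (volume.restrict Ω)
          ≤ HcoN Ω W (k - 1) (g t) := le_HcoN (k - 1) _ p.2 (by omega)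
      have b1' : (⨆ x ∈ Ω, (‖ZIter W p.1 (f t) x‖₊ : ℝ≥0∞))
          ≤ ∑ j' : Fin M, LinfN Ω W ((k - 1) / 2) t fun s => Zop W j' (f s) :=
        le_trans b1 (Finset.single_le_sum
          (f := fun j' => LinfN Ω W ((k - 1) / 2) t fun s => Zop W j' (f s))
          (fun _ _ => zero_le) (Finset.mem_univ j))
      calc _ ≤ (∑ j' : Fin M, LinfN Ω W ((k - 1) / 2) t fun s => Zop W j' (f s))
              * HcoN Ω W (k - 1) (g t) := mul_le_mul' b1' b2
        _ = HcoN Ω W (k - 1) (g t)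
              * ∑ j' : Fin M, LinfN Ω W ((k - 1) / 2) t fun s => Zop W j' (f s) := mul_comm _ _
        _ ≤ S := le_add_self
  calc ((splits L).map fun p =>
          eLpNorm (fun x => ZIter W p.1 (f t) x * ZIter W p.2 (g t) x) 2
            (volume.restrict Ω)).sum
      ≤ ((splits L).map fun _ => S).sum := List.sum_le_sum hterm
    _ = (splits L).length • S := by rw [List.map_const', List.sum_replicate]
    _ = ((splits L).length : ℝ≥0∞) * S := nsmul_eq_mul _ _
    _ ≤ 2 ^ k * S := by
        refine mul_le_mul_left ?_ S
        have h2 := splits_length L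
        rw [hLlen] at h2
        calc ((splits L).length : ℝ≥0∞) ≤ ((2 ^ k : ℕ) : ℝ≥0∞) := by
              exact_mod_cast Nat.le_of_lt_succ (by omega)
          _ = 2 ^ k := by push_cast; ring
end
end

section
/- Green's function derivative bound: with Y = Y(t,t') satisfying νλc₀(t−t') ≤ Y ≤ νλ(t−t')/c₀ for 0 ≤ t' < t and K_±(t,t',z,z') = (4πY)^{−1/2} e^{−|z±z'|²/(4Y)}, one has sup over z of ‖ν^{1/2} ∂_z(K₋ − K₊)(t,t',·,z')‖_{L¹_{z'}(ℝ₊)} ≲ C(1/c₀)(t−t')^{−1/2}. -/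
open MeasureTheory Set Filter

noncomputable section


lemma aux_tendsto (a : ℝ) (ha : 0 < a) :
    Tendsto (fun x : ℝ => -(2*a)⁻¹ * Real.exp (-a * x ^ 2)) atTop (nhds 0) := by
  have h2 : Tendsto (fun x : ℝ => -a * x ^ 2) atTop atBot := by
    have := (tendsto_pow_atTop (n := 2) two_ne_zero).const_mul_atTop ha
    have h3 := tendsto_neg_atTop_atBot.comp this
    simpa [Function.comp_def, neg_mul] using h3
  have := (Real.tendsto_exp_atBot.comp h2).const_mul (-(2*a)⁻¹)
  simpa using this

lemma aux_Ioi (a : ℝ) (ha : 0 < a) :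
    ∫ x in Set.Ioi (0:ℝ), x * Real.exp (-a * x ^ 2) = (2 * a)⁻¹ := by
  have hderiv : ∀ x ∈ Set.Ici (0:ℝ),
      HasDerivAt (fun x : ℝ => -(2*a)⁻¹ * Real.exp (-a * x ^ 2))
        (x * Real.exp (-a * x ^ 2)) x := by
    intro x _
    have h1 : HasDerivAt (fun x : ℝ => -a * x ^ 2) (-a * (2 * x)) x := by
      simpa [mul_comm] using (hasDerivAt_pow 2 x).const_mul (-a)
    have h := (h1.exp).const_mul (-(2*a)⁻¹)
    refine h.congr_deriv ?_
    have ha' : (2*a) ≠ 0 := by positivity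
    linear_combination (x * Real.exp (-a * x ^ 2)) * mul_inv_cancel₀ ha'
  have hint : IntegrableOn (fun x : ℝ => x * Real.exp (-a * x ^ 2)) (Set.Ioi 0) :=
    (integrable_mul_exp_neg_mul_sq ha).integrableOn
  have := MeasureTheory.integral_Ioi_of_hasDerivAt_of_tendsto' hderiv hint (aux_tendsto a ha)
  simpa using this

lemma aux_exparg (b u : ℝ) : -u^2/b = -b⁻¹ * u^2 := by
  rw [neg_div, div_eq_mul_inv, mul_comm, ← neg_mul]

lemma aux_phi_int (b : ℝ) (hb : 0 < b) :
    Integrable (fun u : ℝ => |u| * Real.exp (-u^2/b)) := by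
  have h1 : (fun u : ℝ => |u| * Real.exp (-u^2/b))
      = fun u => |u * Real.exp (-b⁻¹ * u^2)| := funext fun u => by
    rw [abs_mul, abs_of_pos (Real.exp_pos _), aux_exparg]
  rw [h1]
  exact (integrable_mul_exp_neg_mul_sq (inv_pos.mpr hb)).abs

lemma aux_phi_integral (b : ℝ) (hb : 0 < b) :
    ∫ u : ℝ, |u| * Real.exp (-u^2/b) = b := by
  have h1 : (fun u : ℝ => |u| * Real.exp (-u^2/b))
      = fun u => |u| * Real.exp (-b⁻¹ * |u|^2) := funext fun u => by
    rw [sq_abs, aux_exparg]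
  rw [h1, integral_comp_abs (f := fun x => x * Real.exp (-b⁻¹ * x^2)),
    aux_Ioi b⁻¹ (inv_pos.mpr hb)]
  field_simp

/-- Green's function derivative bound: with `Y = Y(t,t')` satisfying
`νλc₀(t−t') ≤ Y ≤ νλ(t−t')/c₀` and `K_± = (4πY)^{−1/2} e^{−|z±z'|²/(4Y)}`, one has
`sup_z ‖ν^{1/2} ∂_z (K₋ − K₊)(·, z')‖_{L¹_{z'}(ℝ₊)} ≤ C(1/c₀) (t−t')^{−1/2}`,
uniformly in `ν`. -/
theorem heat_kernel_derivative_L1_bound (c₀ lam : ℝ) (hc₀ : 0 < c₀) (hlam : 0 < lam) :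
    ∃ C : ℝ, 0 < C ∧
      ∀ ν t t' Y : ℝ, 0 < ν → 0 ≤ t' → t' < t →
        ν * lam * c₀ * (t - t') ≤ Y → Y ≤ ν * lam * (t - t') / c₀ →
        ∀ z : ℝ, 0 ≤ z →
          (∫ z' in Set.Ioi (0:ℝ),
              |Real.sqrt ν *
                deriv (fun w =>
                  (Real.sqrt (4 * Real.pi * Y))⁻¹ * Real.exp (-(|w - z'| ^ 2) / (4 * Y))
                    - (Real.sqrt (4 * Real.pi * Y))⁻¹
                        * Real.exp (-(|w + z'| ^ 2) / (4 * Y))) z|)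
            ≤ C / Real.sqrt (t - t') := by
  have hpi := Real.pi_pos
  refine ⟨4 / Real.sqrt (4 * Real.pi * lam * c₀), by positivity, ?_⟩
  intro ν t t' Y hν ht' htt' hY1 hY2 z hz
  have hΔ : 0 < t - t' := sub_pos.mpr htt'
  have hY0 : 0 < Y := lt_of_lt_of_le (by positivity) hY1
  set b : ℝ := 4 * Y with hbdef
  have hb : 0 < b := by positivity
  set c : ℝ := (Real.sqrt (4 * Real.pi * Y))⁻¹ with hcdef
  have hc : 0 < c := by positivity
  -- derivative computation
  have hderiv : ∀ z' : ℝ,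
      deriv (fun w =>
          c * Real.exp (-(|w - z'| ^ 2) / b) - c * Real.exp (-(|w + z'| ^ 2) / b)) z
        = c * (Real.exp (-(z - z')^2 / b) * (-(2*(z - z'))/b))
            - c * (Real.exp (-(z + z')^2 / b) * (-(2*(z + z'))/b)) := by
    intro z'
    have hfun : (fun w =>
          c * Real.exp (-(|w - z'| ^ 2) / b) - c * Real.exp (-(|w + z'| ^ 2) / b))
        = fun w => c * Real.exp (-(w - z') ^ 2 / b) - c * Real.exp (-(w + z') ^ 2 / b) := by
      funext w; rw [sq_abs, sq_abs]
    rw [hfun]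
    have h1 : HasDerivAt (fun w : ℝ => w - z') 1 z := (hasDerivAt_id z).sub_const z'
    have h1sq : HasDerivAt (fun w : ℝ => (w - z') ^ 2) (2 * (z - z')) z := by
      simpa using h1.fun_pow 2
    have h1e : HasDerivAt (fun w : ℝ => Real.exp (-(w - z') ^ 2 / b))
        (Real.exp (-(z - z')^2 / b) * (-(2*(z - z'))/b)) z :=
      ((h1sq.neg).div_const b).exp
    have h2 : HasDerivAt (fun w : ℝ => w + z') 1 z := (hasDerivAt_id z).add_const z'
    have h2sq : HasDerivAt (fun w : ℝ => (w + z') ^ 2) (2 * (z + z')) z := by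
      simpa using h2.fun_pow 2
    have h2e : HasDerivAt (fun w : ℝ => Real.exp (-(w + z') ^ 2 / b))
        (Real.exp (-(z + z')^2 / b) * (-(2*(z + z'))/b)) z :=
      ((h2sq.neg).div_const b).exp
    exact ((h1e.const_mul c).sub (h2e.const_mul c)).deriv
  -- the dominating function
  set K : ℝ := Real.sqrt ν * c * (2/b) with hKdef
  have hK : 0 ≤ K := by positivity
  set g : ℝ → ℝ := fun z' => K * (|z - z'| * Real.exp (-(z - z')^2/b)
      + |z + z'| * Real.exp (-(z + z')^2/b)) with hgdef
  -- pointwise bound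
  have hpt : ∀ z' : ℝ,
      |Real.sqrt ν * deriv (fun w =>
          c * Real.exp (-(|w - z'| ^ 2) / b) - c * Real.exp (-(|w + z'| ^ 2) / b)) z|
        ≤ g z' := by
    intro z'
    rw [hderiv z']
    have e1 : (0:ℝ) < Real.exp (-(z - z')^2 / b) := Real.exp_pos _
    have e2 : (0:ℝ) < Real.exp (-(z + z')^2 / b) := Real.exp_pos _
    have habs : |Real.sqrt ν * (c * (Real.exp (-(z - z')^2 / b) * (-(2*(z - z'))/b))
            - c * (Real.exp (-(z + z')^2 / b) * (-(2*(z + z'))/b)))|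
        ≤ Real.sqrt ν * (c * (Real.exp (-(z - z')^2 / b) * (2 * |z - z'|/b))
            + c * (Real.exp (-(z + z')^2 / b) * (2 * |z + z'|/b))) := by
      rw [abs_mul, abs_of_nonneg (Real.sqrt_nonneg ν)]
      gcongr
      refine (abs_sub _ _).trans ?_
      have l1 : |c * (Real.exp (-(z - z')^2 / b) * (-(2*(z - z'))/b))|
          = c * (Real.exp (-(z - z')^2 / b) * (2 * |z - z'|/b)) := by
        rw [abs_mul, abs_of_pos hc, abs_mul, abs_of_pos e1, abs_div,
          abs_of_pos hb, abs_neg, abs_mul]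
        norm_num
      have l2 : |c * (Real.exp (-(z + z')^2 / b) * (-(2*(z + z'))/b))|
          = c * (Real.exp (-(z + z')^2 / b) * (2 * |z + z'|/b)) := by
        rw [abs_mul, abs_of_pos hc, abs_mul, abs_of_pos e2, abs_div,
          abs_of_pos hb, abs_neg, abs_mul]
        norm_num
      rw [l1, l2]
    refine habs.trans (le_of_eq ?_)
    rw [hgdef, hKdef]
    ring
  -- integrability of g on Ioi 0
  have hint1 : Integrable (fun z' : ℝ => |z - z'| * Real.exp (-(z - z')^2/b)) := by
    have := (aux_phi_int b hb).comp_sub_left z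
    simpa using this
  have hint2 : Integrable (fun z' : ℝ => |z + z'| * Real.exp (-(z + z')^2/b)) := by
    have := (aux_phi_int b hb).comp_add_left z
    simpa using this
  have hgint : Integrable g (volume.restrict (Set.Ioi (0:ℝ))) :=
    (((hint1.add hint2).const_mul K).integrableOn (s := Set.Ioi 0))
  -- bound the integral of g
  have hg_bound : (∫ z' in Set.Ioi (0:ℝ), g z') ≤ 4 * Real.sqrt ν * c := by
    have hφnn : ∀ u : ℝ, 0 ≤ |u| * Real.exp (-u^2/b) := fun u => by positivity
    have i1 : (∫ z' in Set.Ioi (0:ℝ), |z - z'| * Real.exp (-(z - z')^2/b)) ≤ b := by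
      refine (setIntegral_le_integral hint1 (Eventually.of_forall fun u => hφnn _)).trans ?_
      have := MeasureTheory.integral_sub_left_eq_self
        (fun u : ℝ => |u| * Real.exp (-u^2/b)) volume z
      rw [this, aux_phi_integral b hb]
    have i2 : (∫ z' in Set.Ioi (0:ℝ), |z + z'| * Real.exp (-(z + z')^2/b)) ≤ b := by
      refine (setIntegral_le_integral hint2 (Eventually.of_forall fun u => hφnn _)).trans ?_
      have h := MeasureTheory.integral_add_left_eq_self
        (μ := volume) (fun u : ℝ => |u| * Real.exp (-u^2/b)) z
      rw [h, aux_phi_integral b hb]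
    have : (∫ z' in Set.Ioi (0:ℝ), g z')
        = K * ((∫ z' in Set.Ioi (0:ℝ), |z - z'| * Real.exp (-(z - z')^2/b))
            + (∫ z' in Set.Ioi (0:ℝ), |z + z'| * Real.exp (-(z + z')^2/b))) := by
      rw [hgdef, integral_const_mul, integral_add hint1.integrableOn hint2.integrableOn]
    rw [this]
    calc K * (_ + _) ≤ K * (b + b) := by gcongr
      _ = 4 * Real.sqrt ν * c := by
        rw [hKdef]; field_simp; ring
  -- compare with the target integral
  have hmain : (∫ z' in Set.Ioi (0:ℝ),
      |Real.sqrt ν * deriv (fun w =>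
          (Real.sqrt (4 * Real.pi * Y))⁻¹ * Real.exp (-(|w - z'| ^ 2) / (4 * Y))
            - (Real.sqrt (4 * Real.pi * Y))⁻¹ * Real.exp (-(|w + z'| ^ 2) / (4 * Y))) z|)
      ≤ 4 * Real.sqrt ν * c := by
    refine le_trans ?_ hg_bound
    refine integral_mono_of_nonneg (Eventually.of_forall fun z' => abs_nonneg _) hgint
      (Eventually.of_forall fun z' => ?_)
    exact hpt z'
  refine hmain.trans ?_
  -- final size estimate
  have hsple : Real.sqrt (ν * (4 * Real.pi * lam * c₀ * (t - t'))) ≤ Real.sqrt (4 * Real.pi * Y) := by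
    apply Real.sqrt_le_sqrt
    nlinarith
  have hsp0 : 0 < Real.sqrt (ν * (4 * Real.pi * lam * c₀ * (t - t'))) := by positivity
  have hcle : c ≤ (Real.sqrt (ν * (4 * Real.pi * lam * c₀ * (t - t'))))⁻¹ := by
    rw [hcdef]
    exact inv_anti₀ hsp0 hsple
  have heq : (Real.sqrt (ν * (4 * Real.pi * lam * c₀ * (t - t'))))⁻¹
      = (Real.sqrt ν)⁻¹ * (Real.sqrt (4 * Real.pi * lam * c₀))⁻¹ * (Real.sqrt (t - t'))⁻¹ := by
    rw [show ν * (4 * Real.pi * lam * c₀ * (t - t')) = ν * ((4 * Real.pi * lam * c₀) * (t - t')) by ring,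
      Real.sqrt_mul hν.le, Real.sqrt_mul (by positivity)]
    rw [mul_inv, mul_inv]
    ring
  have hsν : 0 < Real.sqrt ν := Real.sqrt_pos.mpr hν
  calc 4 * Real.sqrt ν * c
      ≤ 4 * Real.sqrt ν * ((Real.sqrt ν)⁻¹ * (Real.sqrt (4 * Real.pi * lam * c₀))⁻¹
          * (Real.sqrt (t - t'))⁻¹) := by
        rw [← heq]; gcongr
    _ = 4 / Real.sqrt (4 * Real.pi * lam * c₀) / Real.sqrt (t - t') := by
        field_simp
end
end

section
/- Iterated scaling-field action on the heat kernel: for each integer k ≥ 0 there exist polynomials P_{2j} of degree 2j (0 ≤ j ≤ k) such that (z∂_z)^k [(4πY)^{−1/2}(e^{−|z−z'|²/(4Y)} − e^{−|z+z'|²/(4Y)})] = (4πY)^{−1/2} Σ_{j=0}^k (z'∂_{z'})^j [P_{2(k−j)}((z−z')/√Y) e^{−|z−z'|²/(4Y)} − P_{2(k−j)}((z+z')/√Y) e^{−|z+z'|²/(4Y)}], where Y > 0 is independent of z, z'. -/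
noncomputable section

/-- The scaling vector field `z ∂_z` acting on functions of one real variable. -/
def SD (g : ℝ → ℝ) : ℝ → ℝ := fun z => z * deriv g z

section Aux


open Polynomial in
/-- one-variable operator `Q ↦ X Q' - (X²/2) Q`. -/
def T1 (Q : Polynomial ℝ) : Polynomial ℝ :=
  X * derivative Q - C (1/2 : ℝ) * X ^ 2 * Q

/-- the polynomial family -/
def Qp : ℕ → ℕ → Polynomial ℝ
  | 0, 0 => 1
  | 0, _+1 => 0
  | k+1, 0 => T1 (Qp k 0)
  | k+1, j+1 => T1 (Qp k (j+1)) - Qp k j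

lemma T1_zero : T1 0 = 0 := by simp [T1]

lemma natDegree_T1_le (Q : Polynomial ℝ) : (T1 Q).natDegree ≤ Q.natDegree + 2 := by
  unfold T1
  refine (Polynomial.natDegree_sub_le _ _).trans ?_
  simp only [max_le_iff]
  constructor
  · refine (Polynomial.natDegree_mul_le).trans ?_
    have := Polynomial.natDegree_derivative_le Q
    simp [Polynomial.natDegree_X]
    omega
  · refine (Polynomial.natDegree_mul_le).trans ?_
    have h1 : (Polynomial.C (1/2 : ℝ) * Polynomial.X ^ 2).natDegree ≤ 2 := by
      refine (Polynomial.natDegree_mul_le).trans ?_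
      simp [Polynomial.natDegree_X_pow]
    omega

lemma Qp_eq_zero_of_lt : ∀ k j, k < j → Qp k j = 0
  | 0, j+1, _ => rfl
  | k+1, j+1, h => by
      have h1 : Qp k (j+1) = 0 := Qp_eq_zero_of_lt k (j+1) (by omega)
      have h2 : Qp k j = 0 := Qp_eq_zero_of_lt k j (by omega)
      simp [Qp, h1, h2, T1_zero]

lemma Qp_degree_le : ∀ k j, (Qp k j).natDegree ≤ 2 * (k - j)
  | 0, 0 => by simp [Qp]
  | 0, j+1 => by simp [Qp]
  | k+1, 0 => by
      have := natDegree_T1_le (Qp k 0)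
      have := Qp_degree_le k 0
      simpa [Qp] using by omega
  | k+1, j+1 => by
      rcases lt_trichotomy k j with hk | rfl | hk
      · rw [Qp_eq_zero_of_lt (k+1) (j+1) (by omega)]; simp
      · show (T1 (Qp k (k+1)) - Qp k k).natDegree ≤ _
        rw [Qp_eq_zero_of_lt k (k+1) (by omega), T1_zero, zero_sub,
          Polynomial.natDegree_neg]
        have := Qp_degree_le k k
        omega
      · have h1 := natDegree_T1_le (Qp k (j+1))
        have h2 := Qp_degree_le k (j+1)
        have h3 := Qp_degree_le k j
        refine (Polynomial.natDegree_sub_le _ _).trans ?_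
        simp only [max_le_iff]
        omega

lemma coeff_T1 (Q : Polynomial ℝ) (n : ℕ) (h : Q.natDegree ≤ n) :
    (T1 Q).coeff (n + 2) = -(1/2) * Q.coeff n := by
  unfold T1
  rw [Polynomial.coeff_sub]
  have h1 : (Polynomial.X * Polynomial.derivative Q).coeff (n+2) = 0 := by
    apply Polynomial.coeff_eq_zero_of_natDegree_lt
    refine lt_of_le_of_lt (Polynomial.natDegree_mul_le) ?_
    have := Polynomial.natDegree_derivative_le Q
    simp [Polynomial.natDegree_X]
    omega
  have h2 : (Polynomial.C (1/2:ℝ) * Polynomial.X ^ 2 * Q).coeff (n+2)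
      = (1/2) * Q.coeff n := by
    rw [mul_assoc, Polynomial.coeff_C_mul, Polynomial.coeff_X_pow_mul]
  rw [h1, h2]; ring

lemma Qp_coeff : ∀ k, ∀ j ≤ k,
    (Qp k j).coeff (2 * (k - j)) = (-1)^k * (k.choose j) * (1/2)^(k-j) := by
  intro k
  induction k with
  | zero => intro j hj; interval_cases j; simp [Qp]
  | succ k ih =>
    intro j hj
    rcases Nat.eq_or_lt_of_le hj with rfl | hlt
    · -- j = k+1
      show (T1 (Qp k (k+1)) - Qp k k).coeff (2*((k+1)-(k+1))) = _
      rw [Qp_eq_zero_of_lt k (k+1) (by omega), T1_zero]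
      have := ih k le_rfl
      simp only [Nat.sub_self, mul_zero, pow_zero, mul_one] at this ⊢
      rw [zero_sub, Polynomial.coeff_neg, this, Nat.choose_self, Nat.choose_self]
      push_cast
      ring
    · -- j ≤ k
      have hjk : j ≤ k := by omega
      have key : 2 * (k + 1 - j) = 2 * (k - j) + 2 := by omega
      cases j with
      | zero =>
        show (T1 (Qp k 0)).coeff (2*(k+1-0)) = _
        rw [key, coeff_T1 _ _ (by simpa using Qp_degree_le k 0), ih 0 (by omega)]
        simp [pow_succ]
        ring
      | succ j =>
        show (T1 (Qp k (j+1)) - Qp k j).coeff (2*(k+1-(j+1))) = _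
        rw [Polynomial.coeff_sub, key,
          coeff_T1 _ _ (by simpa using Qp_degree_le k (j+1)),
          ih (j+1) hjk]
        have h2 : 2*(k-(j+1)) + 2 = 2*(k-j) := by omega
        rw [h2, ih j (by omega)]
        have h4 : k+1-(j+1) = k-j := by omega
        rw [h4]
        have hch : (k+1).choose (j+1) = k.choose j + k.choose (j+1) := Nat.choose_succ_succ k j
        have : (k-(j+1)) + 1 = k - j := by omega
        rw [← this]
        push_cast [hch]
        ring

lemma Qp_ne_zero_and_deg {k j : ℕ} (hj : j ≤ k) :
    Qp k j ≠ 0 ∧ (Qp k j).natDegree = 2 * (k - j) := by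
  have hc := Qp_coeff k j hj
  have hne : (Qp k j).coeff (2 * (k - j)) ≠ 0 := by
    rw [hc]
    have h1 : (k.choose j : ℝ) ≠ 0 := by
      exact_mod_cast (Nat.choose_pos hj).ne'
    exact mul_ne_zero (mul_ne_zero (pow_ne_zero _ (by norm_num)) h1)
      (pow_ne_zero _ (by norm_num))
  constructor
  · intro h; rw [h] at hne; simp at hne
  · exact Polynomial.natDegree_eq_of_le_of_coeff_ne_zero (Qp_degree_le k j) hne

open MvPolynomial

abbrev MP : Type := MvPolynomial (Fin 2) ℝ

/-- the operator `w ∂_w` in (u,s)-coordinates -/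
def TW (B : MP) : MP :=
  (X 0 - X 1) * (pderiv 0 B - C (1/2 : ℝ) * X 0 * B)

/-- the operator `z ∂_z` in (u,s)-coordinates -/
def TZ (B : MP) : MP :=
  X 1 * (pderiv 0 B - C (1/2 : ℝ) * X 0 * B + pderiv 1 B)

def emb (Q : Polynomial ℝ) : MP := Polynomial.aeval (X 0) Q

lemma pd0_X1 : pderiv (0 : Fin 2) (X 1 : MP) = 0 := pderiv_X_of_ne (by decide)
lemma pd1_X0 : pderiv (1 : Fin 2) (X 0 : MP) = 0 := pderiv_X_of_ne (by decide)

lemma pderiv_pderiv (p : MP) :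
    pderiv 0 (pderiv 1 p) = pderiv 1 (pderiv 0 p) := by
  induction p using MvPolynomial.induction_on with
  | C a => simp
  | add p q hp hq => simp [hp, hq]
  | mul_X p n hp =>
    fin_cases n <;>
      · simp [pderiv_mul, hp, pderiv_X_self, pd0_X1, pd1_X0]
        ring

lemma emb_one : emb 1 = 1 := by simp [emb]

lemma pd1_emb (Q : Polynomial ℝ) : pderiv 1 (emb Q) = 0 := by
  induction Q using Polynomial.induction_on' with
  | add p q hp hq => simp only [emb] at hp hq ⊢; simp [map_add, hp, hq]
  | monomial n a =>
    simp [emb, Polynomial.aeval_monomial, pderiv_C_mul, pderiv_pow, pd1_X0]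

lemma pd0_emb (Q : Polynomial ℝ) : pderiv 0 (emb Q) = emb (Polynomial.derivative Q) := by
  induction Q using Polynomial.induction_on' with
  | add p q hp hq => simp only [emb] at hp hq ⊢; simp [map_add, hp, hq]
  | monomial n a =>
    simp [emb, Polynomial.aeval_monomial, pderiv_C_mul, pderiv_pow, pderiv_X_self,
      Polynomial.derivative_monomial, Polynomial.aeval_monomial]
    ring

lemma eval_emb (v : Fin 2 → ℝ) (Q : Polynomial ℝ) : eval v (emb Q) = Q.eval (v 0) := by
  induction Q using Polynomial.induction_on' with
  | add p q hp hq => simp only [emb] at hp hq ⊢; simp [map_add, hp, hq]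
  | monomial n a => simp [emb, Polynomial.aeval_monomial, Polynomial.eval_monomial]

lemma TW_zero : TW 0 = 0 := by simp [TW]
lemma TW_sub (a b : MP) : TW (a - b) = TW a - TW b := by simp [TW, map_sub]; ring
lemma TW_iter_zero (j : ℕ) : TW^[j] 0 = 0 := by
  induction j with
  | zero => rfl
  | succ j ih => rw [Function.iterate_succ_apply, TW_zero, ih]
lemma TW_iter_sub (j : ℕ) (a b : MP) : TW^[j] (a - b) = TW^[j] a - TW^[j] b := by
  induction j generalizing a b with
  | zero => rfl
  | succ j ih => rw [Function.iterate_succ_apply, Function.iterate_succ_apply,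
      Function.iterate_succ_apply, TW_sub, ih]

lemma TZ_sub (a b : MP) : TZ (a - b) = TZ a - TZ b := by simp [TZ, map_sub]; ring
lemma TZ_add (a b : MP) : TZ (a + b) = TZ a + TZ b := by simp [TZ, map_add]; ring
lemma TZ_sum {α : Type*} (s : Finset α) (f : α → MP) :
    TZ (∑ x ∈ s, f x) = ∑ x ∈ s, TZ (f x) := by
  classical
  induction s using Finset.induction_on with
  | empty => simp [TZ]
  | insert _ _ h ih => simp [Finset.sum_insert h, TZ_add, ih]

lemma TZ_TW_comm (B : MP) : TZ (TW B) = TW (TZ B) := by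
  simp only [TZ, TW, map_sub, map_add, pderiv_mul, pderiv_X_self, pd0_X1, pd1_X0,
    pderiv_C, smul_eq_mul]
  rw [pderiv_pderiv]
  ring

lemma TZ_TW_iter (j : ℕ) (B : MP) : TZ (TW^[j] B) = TW^[j] (TZ B) := by
  induction j generalizing B with
  | zero => rfl
  | succ j ih => rw [Function.iterate_succ_apply, Function.iterate_succ_apply, ih, TZ_TW_comm]

lemma Qp_succ_succ (k j : ℕ) : Qp (k+1) (j+1) = T1 (Qp k (j+1)) - Qp k j := rfl
lemma Qp_succ_zero (k : ℕ) : Qp (k+1) 0 = T1 (Qp k 0) := rfl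

lemma emb_sub (p q : Polynomial ℝ) : emb (p - q) = emb p - emb q := by simp [emb]
lemma emb_zero : emb 0 = 0 := by simp [emb]

lemma TZ_emb (Q : Polynomial ℝ) : TZ (emb Q) = emb (T1 Q) - TW (emb Q) := by
  have h1 := pd0_emb Q
  have h2 := pd1_emb Q
  unfold TZ TW T1 at *
  unfold emb at *
  simp only [map_sub, map_mul, map_pow, Polynomial.aeval_X, Polynomial.aeval_C, h1, h2]
  rw [show (algebraMap ℝ MP) (1/2) = C (1/2) from rfl]
  ring

lemma TZ_iter_decomp (k : ℕ) :
    TZ^[k] (emb 1) = ∑ j ∈ Finset.range (k+1), TW^[j] (emb (Qp k j)) := by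
  induction k with
  | zero => simp [Qp]
  | succ k ih =>
    rw [Function.iterate_succ_apply', ih, TZ_sum]
    have step : ∀ j, TZ (TW^[j] (emb (Qp k j)))
        = TW^[j] (emb (T1 (Qp k j))) - TW^[j+1] (emb (Qp k j)) := by
      intro j
      rw [TZ_TW_iter, TZ_emb, TW_iter_sub, Function.iterate_succ_apply]
    simp only [step]
    rw [Finset.sum_sub_distrib]
    rw [Finset.sum_range_succ' (fun j => TW^[j] (emb (Qp (k+1) j))) (k+1)]
    simp only [Qp_succ_succ, Qp_succ_zero, emb_sub, TW_iter_sub, Function.iterate_zero_apply]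
    rw [Finset.sum_sub_distrib]
    have hA : ∑ j ∈ Finset.range (k+1), TW^[j] (emb (T1 (Qp k j)))
        = (∑ j ∈ Finset.range k, TW^[j+1] (emb (T1 (Qp k (j+1)))))
          + TW^[0] (emb (T1 (Qp k 0))) :=
      Finset.sum_range_succ' (fun j => TW^[j] (emb (T1 (Qp k j)))) k
    have hC : ∑ j ∈ Finset.range (k+1), TW^[j+1] (emb (T1 (Qp k (j+1))))
        = (∑ j ∈ Finset.range k, TW^[j+1] (emb (T1 (Qp k (j+1)))))
          + TW^[k+1] (emb (T1 (Qp k (k+1)))) :=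
      Finset.sum_range_succ _ k
    rw [hA, hC, Qp_eq_zero_of_lt k (k+1) (by omega), T1_zero, emb_zero, TW_iter_zero,
      Function.iterate_zero_apply]
    abel
def Phi (B : MP) (Y z : ℝ) : ℝ → ℝ := fun w =>
  eval ![(z - w) / Real.sqrt Y, z / Real.sqrt Y] B * Real.exp (-(z - w) ^ 2 / (4 * Y))
    - eval ![(z + w) / Real.sqrt Y, z / Real.sqrt Y] B * Real.exp (-(z + w) ^ 2 / (4 * Y))

lemma mv_hasDerivAt (B : MP) (v : ℝ → Fin 2 → ℝ) (v' : Fin 2 → ℝ) (t : ℝ)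
    (hv : ∀ i, HasDerivAt (fun x => v x i) (v' i) t) :
    HasDerivAt (fun x => eval (v x) B)
      (∑ i, eval (v t) (pderiv i B) * v' i) t := by
  induction B using MvPolynomial.induction_on with
  | C a => simpa using hasDerivAt_const t a
  | add p q hp hq =>
    have := hp.add hq
    simp only [map_add, add_mul, Finset.sum_add_distrib] at *
    exact this
  | mul_X p n hp =>
    have h := hp.mul (hv n)
    have he : ∀ x, eval (v x) (p * X n) = eval (v x) p * v x n := by
      intro x; simp
    simp only [he]
    refine h.congr_deriv ?_
    fin_cases n <;>
      simp [pderiv_mul, Fin.sum_univ_two, pderiv_X_self,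
        pderiv_X_of_ne (show (1:Fin 2) ≠ 0 by decide),
        pderiv_X_of_ne (show (0:Fin 2) ≠ 1 by decide)] <;> ring

lemma term_hasDerivAt (B : MP) {Y : ℝ} (hY : 0 < Y) {f g : ℝ → ℝ} {f' g' t : ℝ}
    (hf : HasDerivAt f f' t) (hg : HasDerivAt g g' t) :
    HasDerivAt (fun x => eval ![f x / Real.sqrt Y, g x / Real.sqrt Y] B
        * Real.exp (-(f x) ^ 2 / (4 * Y)))
      ((eval ![f t / Real.sqrt Y, g t / Real.sqrt Y] (pderiv 0 B) * (f' / Real.sqrt Y)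
        + eval ![f t / Real.sqrt Y, g t / Real.sqrt Y] (pderiv 1 B) * (g' / Real.sqrt Y))
          * Real.exp (-(f t) ^ 2 / (4 * Y))
        + eval ![f t / Real.sqrt Y, g t / Real.sqrt Y] B
            * (Real.exp (-(f t) ^ 2 / (4 * Y)) * (-(f t) * f' / (2 * Y)))) t := by
  have hY' : Y ≠ 0 := hY.ne'
  have h1 : HasDerivAt (fun x => eval ![f x / Real.sqrt Y, g x / Real.sqrt Y] B)
      (eval ![f t / Real.sqrt Y, g t / Real.sqrt Y] (pderiv 0 B) * (f' / Real.sqrt Y)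
        + eval ![f t / Real.sqrt Y, g t / Real.sqrt Y] (pderiv 1 B) * (g' / Real.sqrt Y)) t := by
    have hv : ∀ i : Fin 2, HasDerivAt
        (fun x => (![f x / Real.sqrt Y, g x / Real.sqrt Y] : Fin 2 → ℝ) i)
        ((![f' / Real.sqrt Y, g' / Real.sqrt Y] : Fin 2 → ℝ) i) t := by
      intro i
      fin_cases i
      · simpa using hf.div_const (Real.sqrt Y)
      · simpa using hg.div_const (Real.sqrt Y)
    have := mv_hasDerivAt B (fun x => ![f x / Real.sqrt Y, g x / Real.sqrt Y])
      ![f' / Real.sqrt Y, g' / Real.sqrt Y] t hv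
    convert this using 1
    simp [Fin.sum_univ_two]
  have h2 : HasDerivAt (fun x => Real.exp (-(f x) ^ 2 / (4 * Y)))
      (Real.exp (-(f t) ^ 2 / (4 * Y)) * (-(f t) * f' / (2 * Y))) t := by
    have hinner : HasDerivAt (fun x => -(f x) ^ 2 / (4 * Y)) (-(f t) * f' / (2 * Y)) t := by
      have := ((hf.pow 2).neg).div_const (4 * Y)
      refine this.congr_deriv ?_
      field_simp
      ring
    exact hinner.exp
  exact h1.mul h2

lemma SD_Phi_w (B : MP) {Y : ℝ} (hY : 0 < Y) (z w : ℝ) :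
    SD (Phi B Y z) w = Phi (TW B) Y z w := by
  have hsq : Real.sqrt Y > 0 := Real.sqrt_pos.mpr hY
  have hs : Real.sqrt Y ≠ 0 := hsq.ne'
  have hs2 : Real.sqrt Y * Real.sqrt Y = Y := Real.mul_self_sqrt hY.le
  have hY' : Y ≠ 0 := hY.ne'
  have hm := term_hasDerivAt B hY (f := fun x => z - x) (g := fun _ => z)
    (HasDerivAt.const_sub z (hasDerivAt_id w)) (hasDerivAt_const w z)
  have hp := term_hasDerivAt B hY (f := fun x => z + x) (g := fun _ => z)
    (HasDerivAt.const_add z (hasDerivAt_id w)) (hasDerivAt_const w z)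
  have hD : HasDerivAt (Phi B Y z)
      (((eval ![(z - w) / Real.sqrt Y, z / Real.sqrt Y] (pderiv 0 B) * (-1 / Real.sqrt Y)
        + eval ![(z - w) / Real.sqrt Y, z / Real.sqrt Y] (pderiv 1 B) * (0 / Real.sqrt Y))
          * Real.exp (-(z - w) ^ 2 / (4 * Y))
        + eval ![(z - w) / Real.sqrt Y, z / Real.sqrt Y] B
            * (Real.exp (-(z - w) ^ 2 / (4 * Y)) * (-(z - w) * (-1) / (2 * Y))))
      - ((eval ![(z + w) / Real.sqrt Y, z / Real.sqrt Y] (pderiv 0 B) * (1 / Real.sqrt Y)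
        + eval ![(z + w) / Real.sqrt Y, z / Real.sqrt Y] (pderiv 1 B) * (0 / Real.sqrt Y))
          * Real.exp (-(z + w) ^ 2 / (4 * Y))
        + eval ![(z + w) / Real.sqrt Y, z / Real.sqrt Y] B
            * (Real.exp (-(z + w) ^ 2 / (4 * Y)) * (-(z + w) * 1 / (2 * Y))))) w := by
    exact hm.sub hp
  show w * deriv (Phi B Y z) w = _
  rw [hD.deriv]
  simp only [Phi, TW, map_sub, map_mul, eval_X, eval_C,
    Matrix.cons_val_zero, Matrix.cons_val_one, Matrix.head_cons]
  have hY2 : Y = Real.sqrt Y ^ 2 := (Real.sq_sqrt hY.le).symm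
  set r := Real.sqrt Y with hr
  rw [hY2]
  field_simp
  ring

lemma SD_Phi_z (B : MP) {Y : ℝ} (hY : 0 < Y) (z w : ℝ) :
    SD (fun x => Phi B Y x w) z = Phi (TZ B) Y z w := by
  have hsq : Real.sqrt Y > 0 := Real.sqrt_pos.mpr hY
  have hs : Real.sqrt Y ≠ 0 := hsq.ne'
  have hs2 : Real.sqrt Y * Real.sqrt Y = Y := Real.mul_self_sqrt hY.le
  have hY' : Y ≠ 0 := hY.ne'
  have hm := term_hasDerivAt B hY (f := fun x => x - w) (g := fun x => x)
    (HasDerivAt.sub_const w (hasDerivAt_id z)) (hasDerivAt_id z)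
  have hp := term_hasDerivAt B hY (f := fun x => x + w) (g := fun x => x)
    (HasDerivAt.add_const w (hasDerivAt_id z)) (hasDerivAt_id z)
  have hD : HasDerivAt (fun x => Phi B Y x w)
      (((eval ![(z - w) / Real.sqrt Y, z / Real.sqrt Y] (pderiv 0 B) * (1 / Real.sqrt Y)
        + eval ![(z - w) / Real.sqrt Y, z / Real.sqrt Y] (pderiv 1 B) * (1 / Real.sqrt Y))
          * Real.exp (-(z - w) ^ 2 / (4 * Y))
        + eval ![(z - w) / Real.sqrt Y, z / Real.sqrt Y] B
            * (Real.exp (-(z - w) ^ 2 / (4 * Y)) * (-(z - w) * 1 / (2 * Y))))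
      - ((eval ![(z + w) / Real.sqrt Y, z / Real.sqrt Y] (pderiv 0 B) * (1 / Real.sqrt Y)
        + eval ![(z + w) / Real.sqrt Y, z / Real.sqrt Y] (pderiv 1 B) * (1 / Real.sqrt Y))
          * Real.exp (-(z + w) ^ 2 / (4 * Y))
        + eval ![(z + w) / Real.sqrt Y, z / Real.sqrt Y] B
            * (Real.exp (-(z + w) ^ 2 / (4 * Y)) * (-(z + w) * 1 / (2 * Y))))) z := by
    exact hm.sub hp
  show z * deriv (fun x => Phi B Y x w) z = _
  rw [hD.deriv]
  simp only [Phi, TZ, map_add, map_sub, map_mul, eval_X, eval_C,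
    Matrix.cons_val_zero, Matrix.cons_val_one, Matrix.head_cons]
  have hY2 : Y = Real.sqrt Y ^ 2 := (Real.sq_sqrt hY.le).symm
  set r := Real.sqrt Y with hr
  rw [hY2]
  field_simp
  ring

lemma SD_iter_Phi (B : MP) {Y : ℝ} (hY : 0 < Y) (z : ℝ) (j : ℕ) :
    SD^[j] (Phi B Y z) = Phi (TW^[j] B) Y z := by
  induction j generalizing B with
  | zero => rfl
  | succ j ih =>
    rw [Function.iterate_succ_apply,
      show SD (Phi B Y z) = Phi (TW B) Y z from funext (SD_Phi_w B hY z), ih,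
      ← Function.iterate_succ_apply]

lemma SD_iter_kernel (B : MP) {Y : ℝ} (hY : 0 < Y) (w c : ℝ) (k : ℕ) :
    SD^[k] (fun z => c * Phi B Y z w) = fun z => c * Phi (TZ^[k] B) Y z w := by
  induction k with
  | zero => rfl
  | succ k ih =>
    rw [Function.iterate_succ_apply', ih]
    funext z
    show SD (fun z => c * Phi (TZ^[k] B) Y z w) z = _
    unfold SD
    rw [deriv_const_mul_field]
    have h := SD_Phi_z (TZ^[k] B) hY z w
    unfold SD at h
    rw [Function.iterate_succ_apply', ← h]
    ring

lemma Phi_sum {α : Type*} (s : Finset α) (f : α → MP) (Y z w : ℝ) :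
    Phi (∑ x ∈ s, f x) Y z w = ∑ x ∈ s, Phi (f x) Y z w := by
  simp [Phi, map_sum, Finset.sum_mul, Finset.sum_sub_distrib]


lemma Phi_emb (Q : Polynomial ℝ) (Y z : ℝ) :
    Phi (emb Q) Y z = fun w =>
      Q.eval ((z - w) / Real.sqrt Y) * Real.exp (-(z - w) ^ 2 / (4 * Y))
        - Q.eval ((z + w) / Real.sqrt Y) * Real.exp (-(z + w) ^ 2 / (4 * Y)) := by
  funext w
  simp [Phi, eval_emb]

end Aux

/-- Iterated scaling-field action on the half-line heat kernel: for each `k` there are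
polynomials `P_j` of degree `2(k−j)` (`0 ≤ j ≤ k`) such that
`(z∂_z)^k [(4πY)^{−1/2}(e^{−(z−z')²/4Y} − e^{−(z+z')²/4Y})]
 = (4πY)^{−1/2} Σ_{j=0}^k (z'∂_{z'})^j [P_j((z−z')/√Y) e^{−(z−z')²/4Y}
    − P_j((z+z')/√Y) e^{−(z+z')²/4Y}]`. -/
theorem scaling_field_heat_kernel_structure (k : ℕ) :
    ∃ P : ℕ → Polynomial ℝ,
      (∀ j ≤ k, P j ≠ 0 ∧ (P j).natDegree = 2 * (k - j)) ∧
      ∀ Y : ℝ, 0 < Y → ∀ z z' : ℝ, 0 < z → 0 < z' →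
        SD^[k] (fun w =>
            (Real.sqrt (4 * Real.pi * Y))⁻¹
              * (Real.exp (-(w - z') ^ 2 / (4 * Y)) - Real.exp (-(w + z') ^ 2 / (4 * Y)))) z
          = (Real.sqrt (4 * Real.pi * Y))⁻¹
              * ∑ j ∈ Finset.range (k + 1),
                  SD^[j] (fun w =>
                    (P j).eval ((z - w) / Real.sqrt Y) * Real.exp (-(z - w) ^ 2 / (4 * Y))
                      - (P j).eval ((z + w) / Real.sqrt Y)
                          * Real.exp (-(z + w) ^ 2 / (4 * Y))) z' := by
  classical
  refine ⟨Qp k, fun j hj => Qp_ne_zero_and_deg hj, ?_⟩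
  intro Y hY z z' hz hz'
  have hker : (fun w =>
      (Real.sqrt (4 * Real.pi * Y))⁻¹
        * (Real.exp (-(w - z') ^ 2 / (4 * Y)) - Real.exp (-(w + z') ^ 2 / (4 * Y))))
      = fun x => (Real.sqrt (4 * Real.pi * Y))⁻¹ * Phi 1 Y x z' := by
    funext x
    simp [Phi]
  rw [hker, SD_iter_kernel 1 hY z' _ k]
  have hdec : TZ^[k] (1 : MP) = ∑ j ∈ Finset.range (k+1), TW^[j] (emb (Qp k j)) := by
    rw [← emb_one]
    exact TZ_iter_decomp k
  rw [hdec]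
  beta_reduce
  rw [Phi_sum]
  congr 1
  refine Finset.sum_congr rfl fun j hj => ?_
  rw [← SD_iter_Phi (emb (Qp k j)) hY z j, Phi_emb]
end
end
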